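/- arXiv:1509.06263 — 2 statements merged into one kernel-verified Lean document; each statement's English description precedes it below -/
import Mathlib

section
/- Let {f_i}_{i∈I} be a Riesz basis for H. Then a family {ω_j}_{j∈I} in H is an R-dual of type IV of {f_i} (with respect to some pair of Riesz bases {e_j}, {h_i} for H) if and only if {ω_j} is a Riesz basis for H. -/
open scoped ComplexInnerProductSpace ENNReal

noncomputable section

section Defs

variable {H : Type*} [NormedAddCommGroup H] [InnerProductSpace ℂ H]
variable {I : Type*}

/-- `A` is a lower frame bound for the family `f`. -/
def FrameLower (f : I → H) (A : ℝ) : Prop :=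
  ∀ (x : H) (s : ℝ), HasSum (fun i => ‖⟪x, f i⟫‖ ^ 2) s → A * ‖x‖ ^ 2 ≤ s

/-- `B` is an upper frame bound for the family `f` (including summability). -/
def FrameUpper (f : I → H) (B : ℝ) : Prop :=
  ∀ x : H, ∃ s : ℝ, HasSum (fun i => ‖⟪x, f i⟫‖ ^ 2) s ∧ s ≤ B * ‖x‖ ^ 2

/-- `f` is a frame with bounds `A`, `B`. -/
def IsFrameWith (f : I → H) (A B : ℝ) : Prop :=
  0 < A ∧ A ≤ B ∧ FrameLower f A ∧ FrameUpper f B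

/-- `A`, `B` are the optimal frame bounds of `f`. -/
def OptimalFrameBounds (f : I → H) (A B : ℝ) : Prop :=
  IsFrameWith f A B ∧ (∀ A' : ℝ, FrameLower f A' → A' ≤ A) ∧
    ∀ B' : ℝ, FrameUpper f B' → B ≤ B'

/-- `A` is a lower Riesz-sequence bound for `ω`. -/
def RieszLower (ω : I → H) (A : ℝ) : Prop :=
  ∀ c : I →₀ ℂ, A * ∑ i ∈ c.support, ‖c i‖ ^ 2 ≤ ‖∑ i ∈ c.support, c i • ω i‖ ^ 2

/-- `B` is an upper Riesz-sequence bound for `ω`. -/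
def RieszUpper (ω : I → H) (B : ℝ) : Prop :=
  ∀ c : I →₀ ℂ, ‖∑ i ∈ c.support, c i • ω i‖ ^ 2 ≤ B * ∑ i ∈ c.support, ‖c i‖ ^ 2

/-- `ω` is a Riesz sequence with bounds `A`, `B`. -/
def IsRieszSeqWith (ω : I → H) (A B : ℝ) : Prop :=
  0 < A ∧ A ≤ B ∧ RieszLower ω A ∧ RieszUpper ω B

/-- `A`, `B` are the optimal Riesz-sequence bounds of `ω`. -/
def OptimalRieszBounds (ω : I → H) (A B : ℝ) : Prop :=
  IsRieszSeqWith ω A B ∧ (∀ A' : ℝ, RieszLower ω A' → A' ≤ A) ∧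
    ∀ B' : ℝ, RieszUpper ω B' → B ≤ B'

/-- `ω` is a Riesz basis for `H`: a Riesz sequence whose closed linear span is all of `H`. -/
def IsRieszBasisFor (ω : I → H) : Prop :=
  (∃ A B : ℝ, IsRieszSeqWith ω A B) ∧
    (Submodule.span ℂ (Set.range ω)).topologicalClosure = ⊤

/-- `R` is a (self-adjoint, positive) square root of `T`. -/
def IsPosSqrtOf (R T : H →L[ℂ] H) : Prop :=
  (∀ x y : H, ⟪R x, y⟫ = ⟪x, R y⟫) ∧ (∀ x : H, 0 ≤ (⟪R x, x⟫).re) ∧ R ∘L R = T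

/-- `S` and `T` are mutually inverse operators. -/
def AreInverse (S T : H →L[ℂ] H) : Prop :=
  S ∘L T = ContinuousLinearMap.id ℂ H ∧ T ∘L S = ContinuousLinearMap.id ℂ H

/-- Property (★): for every `d ∈ ℓ²(I)` whose coordinatewise conjugate lies in the range of
the analysis operator (encoded by the predicate `rangeU`), one has
`(1/√nSinv)·‖d‖ ≤ ‖Q (∑ dᵢ hbᵢ)‖ ≤ √nS·‖d‖`, and the constants `1/√nSinv`, `√nS`
are optimal. -/
def PropertyStar (rangeU : (I → ℂ) → Prop) (hb : HilbertBasis I ℂ H)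
    (Q : H →L[ℂ] H) (nS nSinv : ℝ) : Prop :=
  (∀ (d : I → ℂ) (v : H), HasSum (fun i => d i • (hb i : H)) v → rangeU d →
      (1 / Real.sqrt nSinv) * Real.sqrt (∑' i, ‖d i‖ ^ 2) ≤ ‖Q v‖ ∧
        ‖Q v‖ ≤ Real.sqrt nS * Real.sqrt (∑' i, ‖d i‖ ^ 2)) ∧
  (∀ B' : ℝ,
      (∀ (d : I → ℂ) (v : H), HasSum (fun i => d i • (hb i : H)) v → rangeU d →
        ‖Q v‖ ≤ B' * Real.sqrt (∑' i, ‖d i‖ ^ 2)) →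
      Real.sqrt nS ≤ B') ∧
  (∀ A' : ℝ,
      (∀ (d : I → ℂ) (v : H), HasSum (fun i => d i • (hb i : H)) v → rangeU d →
        A' * Real.sqrt (∑' i, ‖d i‖ ^ 2) ≤ ‖Q v‖) →
      A' ≤ 1 / Real.sqrt nSinv)

/-- `ω` is the R-dual of type III determined by the data `(g, e, hb, Q)`, where `g i`
stands for `S^{-1/2} f i`:  `ω j = ∑ᵢ ⟪S^{-1/2} fᵢ, eⱼ⟫ • Q hbᵢ`. -/
def IsRDualIIIOf (g : I → H) (e hb : HilbertBasis I ℂ H) (Q : H →L[ℂ] H) (ω : I → H) : Prop :=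
  ∀ j, HasSum (fun i => ⟪g i, e j⟫ • Q (hb i : H)) (ω j)

end Defs

section AuxHelpers

variable {H : Type*} [NormedAddCommGroup H] [InnerProductSpace ℂ H]
variable {I : Type*}

open Finset in
lemma riesz_finset_sums (f : I → H) (s : Finset I) (x : I → ℂ) :
    ∃ c : I →₀ ℂ, (∑ i ∈ c.support, c i • f i = ∑ i ∈ s, x i • f i) ∧
      (∑ i ∈ c.support, ‖c i‖ ^ 2 = ∑ i ∈ s, ‖x i‖ ^ 2) := by
  classical
  refine ⟨Finsupp.onFinset s (fun i => if i ∈ s then x i else 0)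
    (fun i h => by by_contra hs; simp [hs] at h), ?_, ?_⟩
  · refine (Finset.sum_subset Finsupp.support_onFinset_subset ?_).trans
      (Finset.sum_congr rfl ?_)
    · intro i hi hni
      rw [Finsupp.notMem_support_iff.mp hni, zero_smul]
    · intro i hi; simp [Finsupp.onFinset, hi]
  · refine (Finset.sum_subset Finsupp.support_onFinset_subset ?_).trans
      (Finset.sum_congr rfl ?_)
    · intro i hi hni
      rw [Finsupp.notMem_support_iff.mp hni]; simp
    · intro i hi; simp [Finsupp.onFinset, hi]

lemma rieszUpper_finset {f : I → H} {B : ℝ} (hB : RieszUpper f B)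
    (s : Finset I) (x : I → ℂ) :
    ‖∑ i ∈ s, x i • f i‖ ^ 2 ≤ B * ∑ i ∈ s, ‖x i‖ ^ 2 := by
  obtain ⟨c, h1, h2⟩ := riesz_finset_sums f s x
  rw [← h1, ← h2]; exact hB c

lemma rieszLower_finset {f : I → H} {A : ℝ} (hA : RieszLower f A)
    (s : Finset I) (x : I → ℂ) :
    A * ∑ i ∈ s, ‖x i‖ ^ 2 ≤ ‖∑ i ∈ s, x i • f i‖ ^ 2 := by
  obtain ⟨c, h1, h2⟩ := riesz_finset_sums f s x
  rw [← h1, ← h2]; exact hA c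

lemma l2_hasSum_norm (x : lp (fun _ : I => ℂ) 2) :
    HasSum (fun i => ‖x i‖ ^ 2) (‖x‖ ^ 2) := by
  have h := lp.hasSum_norm (p := 2) (by norm_num) x
  simp only [ENNReal.toReal_ofNat] at h
  convert h using 2 <;> rw [← Real.rpow_natCast] <;> norm_num

variable [CompleteSpace H]

lemma summable_smul_of_rieszUpper {f : I → H} {B : ℝ} (hB : RieszUpper f B)
    (x : lp (fun _ : I => ℂ) 2) : Summable fun i => x i • f i := by
  rw [summable_iff_vanishing_norm]
  intro ε hε
  set B' := max B 1 with hB'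
  have hB'0 : (0:ℝ) < B' := lt_of_lt_of_le one_pos (le_max_right _ _)
  have hsx : Summable (fun i => ‖x i‖ ^ 2) := (l2_hasSum_norm x).summable
  obtain ⟨s, hs⟩ := summable_iff_vanishing_norm.mp hsx (ε ^ 2 / B') (by positivity)
  refine ⟨s, fun t ht => ?_⟩
  have h3 : ∑ i ∈ t, ‖x i‖ ^ 2 < ε ^ 2 / B' := by
    have h0 : (0:ℝ) ≤ ∑ i ∈ t, ‖x i‖ ^ 2 := by positivity
    have := hs t ht
    rwa [Real.norm_of_nonneg h0] at this
  have hlt : ‖∑ i ∈ t, x i • f i‖ ^ 2 < ε ^ 2 := by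
    calc ‖∑ i ∈ t, x i • f i‖ ^ 2 ≤ B * ∑ i ∈ t, ‖x i‖ ^ 2 := rieszUpper_finset hB t x
      _ ≤ B' * ∑ i ∈ t, ‖x i‖ ^ 2 :=
          mul_le_mul_of_nonneg_right (le_max_left _ _) (by positivity)
      _ < B' * (ε ^ 2 / B') := by exact mul_lt_mul_of_pos_left h3 hB'0
      _ = ε ^ 2 := by field_simp
  exact lt_of_pow_lt_pow_left₀ 2 hε.le hlt

lemma exists_equiv_of_rieszBasis (f : I → H) (hf : IsRieszBasisFor f) :
    ∃ T : lp (fun _ : I => ℂ) 2 ≃L[ℂ] H, ∀ x, HasSum (fun i => x i • f i) (T x) := by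
  classical
  obtain ⟨⟨A, B, hA0, hAB, hlow, hup⟩, hdense⟩ := hf
  have hsum : ∀ x : lp (fun _ : I => ℂ) 2, Summable fun i => x i • f i :=
    summable_smul_of_rieszUpper hup
  set T0 : lp (fun _ : I => ℂ) 2 →ₗ[ℂ] H :=
    { toFun := fun x => ∑' i, x i • f i
      map_add' := fun x y => by
        simp only [lp.coeFn_add, Pi.add_apply, add_smul]
        exact Summable.tsum_add (hsum x) (hsum y)
      map_smul' := fun c x => by
        simp only [lp.coeFn_smul, Pi.smul_apply, smul_eq_mul, RingHom.id_apply]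
        calc (∑' i, (c * x i) • f i) = ∑' i, c • (x i • f i) := by
              congr 1; funext i; rw [mul_smul]
          _ = c • ∑' i, x i • f i := ((hsum x).hasSum.const_smul c).tsum_eq } with hT0
  have hTx0 : ∀ x : lp (fun _ : I => ℂ) 2, HasSum (fun i => x i • f i) (T0 x) :=
    fun x => (hsum x).hasSum
  have hbound : ∀ x : lp (fun _ : I => ℂ) 2, ‖T0 x‖ ≤ Real.sqrt (max B 1) * ‖x‖ := by
    intro x
    refine le_of_tendsto (Filter.Tendsto.norm (hTx0 x)) (Filter.Eventually.of_forall fun s => ?_)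
    have h1 : ‖∑ i ∈ s, x i • f i‖ ^ 2 ≤ max B 1 * ‖x‖ ^ 2 := by
      calc ‖∑ i ∈ s, x i • f i‖ ^ 2 ≤ B * ∑ i ∈ s, ‖x i‖ ^ 2 := rieszUpper_finset hup s x
        _ ≤ max B 1 * ∑ i ∈ s, ‖x i‖ ^ 2 :=
            mul_le_mul_of_nonneg_right (le_max_left _ _) (by positivity)
        _ ≤ max B 1 * ‖x‖ ^ 2 := by
            refine mul_le_mul_of_nonneg_left ?_ (by positivity)
            exact sum_le_hasSum s (fun i _ => by positivity) (l2_hasSum_norm x)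
    calc ‖∑ i ∈ s, x i • f i‖ = Real.sqrt (‖∑ i ∈ s, x i • f i‖ ^ 2) :=
          (Real.sqrt_sq (norm_nonneg _)).symm
      _ ≤ Real.sqrt (max B 1 * ‖x‖ ^ 2) := Real.sqrt_le_sqrt h1
      _ = Real.sqrt (max B 1) * ‖x‖ := by
          rw [Real.sqrt_mul (by positivity), Real.sqrt_sq (norm_nonneg _)]
  set T1 : lp (fun _ : I => ℂ) 2 →L[ℂ] H := T0.mkContinuous (Real.sqrt (max B 1)) hbound with hT1
  have hTx : ∀ x : lp (fun _ : I => ℂ) 2, HasSum (fun i => x i • f i) (T1 x) := hTx0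
  have hlow2 : ∀ x : lp (fun _ : I => ℂ) 2, A * ‖x‖ ^ 2 ≤ ‖T1 x‖ ^ 2 := by
    intro x
    have t1 : Filter.Tendsto (fun s : Finset I => A * ∑ i ∈ s, ‖x i‖ ^ 2)
        Filter.atTop (nhds (A * ‖x‖ ^ 2)) := (l2_hasSum_norm x).const_mul A
    have t2 : Filter.Tendsto (fun s : Finset I => ‖∑ i ∈ s, x i • f i‖ ^ 2)
        Filter.atTop (nhds (‖T1 x‖ ^ 2)) := (Filter.Tendsto.norm (hTx x)).pow 2
    exact le_of_tendsto_of_tendsto' t1 t2 (fun s => rieszLower_finset hlow s x)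
  have hsA : 0 < Real.sqrt A := Real.sqrt_pos.mpr hA0
  have hanti : AntilipschitzWith ((Real.sqrt A).toNNReal)⁻¹ T1 := by
    refine AddMonoidHomClass.antilipschitz_of_bound T1 fun x => ?_
    have h1 : Real.sqrt A * ‖x‖ ≤ ‖T1 x‖ := by
      calc Real.sqrt A * ‖x‖ = Real.sqrt (A * ‖x‖ ^ 2) := by
            rw [Real.sqrt_mul hA0.le, Real.sqrt_sq (norm_nonneg _)]
        _ ≤ Real.sqrt (‖T1 x‖ ^ 2) := Real.sqrt_le_sqrt (hlow2 x)
        _ = ‖T1 x‖ := Real.sqrt_sq (norm_nonneg _)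
    rw [NNReal.coe_inv, Real.coe_toNNReal _ hsA.le, inv_mul_eq_div, le_div_iff₀ hsA]
    linarith
  have hinj : Function.Injective T1 := hanti.injective
  have hker : LinearMap.ker (T1 : lp (fun _ : I => ℂ) 2 →ₗ[ℂ] H) = ⊥ := LinearMap.ker_eq_bot_of_injective (f := (T1 : lp (fun _ : I => ℂ) 2 →ₗ[ℂ] H)) hinj
  have hfi : ∀ i, T1 (lp.single 2 i 1) = f i := by
    intro i
    refine (hTx (lp.single 2 i 1)).unique ?_
    have he : (fun j => (lp.single 2 i (1:ℂ) : ∀ _, ℂ) j • f j)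
        = fun j => if j = i then f i else 0 := by
      funext j
      rcases eq_or_ne j i with rfl | h
      · simp [lp.single_apply_self]
      · simp [lp.single_apply_ne _ _ _ h, h]
    rw [he]
    exact hasSum_ite_eq i (f i)
  have hransub : Submodule.span ℂ (Set.range f) ≤ LinearMap.range (T1 : lp (fun _ : I => ℂ) 2 →ₗ[ℂ] H) := by
    rw [Submodule.span_le]
    rintro _ ⟨i, rfl⟩
    exact ⟨lp.single 2 i 1, hfi i⟩
  have hclosed : IsClosed ((LinearMap.range (T1 : lp (fun _ : I => ℂ) 2 →ₗ[ℂ] H) : Submodule ℂ H) : Set H) := by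
    have h := hanti.isClosed_range T1.uniformContinuous
    rw [LinearMap.coe_range]
    exact h
  have hrange : LinearMap.range (T1 : lp (fun _ : I => ℂ) 2 →ₗ[ℂ] H) = ⊤ := by
    rw [← top_le_iff, ← hdense]
    exact Submodule.topologicalClosure_minimal _ hransub hclosed
  refine ⟨ContinuousLinearEquiv.ofBijective T1 hker hrange, fun x => ?_⟩
  have : (ContinuousLinearEquiv.ofBijective T1 hker hrange) x = T1 x := rfl
  rw [this]
  exact hTx x


lemma rpow_toReal_two (a : ℝ) : a ^ ((2:ℝ≥0∞)).toReal = a ^ 2 := by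
  rw [ENNReal.toReal_ofNat, ← Real.rpow_natCast a 2]
  norm_num

lemma l2_norm_sq_sum_single [DecidableEq I] (c : I →₀ ℂ) :
    ‖∑ i ∈ c.support, lp.single 2 i (c i)‖ ^ 2 = ∑ i ∈ c.support, ‖c i‖ ^ 2 := by
  have h := lp.norm_sum_single (p := 2) (E := fun _ : I => ℂ) (by norm_num)
    (fun i => c i) c.support
  rw [rpow_toReal_two] at h
  rw [h]
  exact Finset.sum_congr rfl fun i _ => rpow_toReal_two _

lemma isRieszBasisFor_of_equiv [DecidableEq I] (T : lp (fun _ : I => ℂ) 2 ≃L[ℂ] H) (f : I → H)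
    (hfT : ∀ i, f i = T (lp.single 2 i 1)) : IsRieszBasisFor f := by
  classical
  set M := max 1 ‖(T : lp (fun _ : I => ℂ) 2 →L[ℂ] H)‖ with hM
  set N := max 1 ‖(T.symm : H →L[ℂ] lp (fun _ : I => ℂ) 2)‖ with hN
  have hM1 : (1:ℝ) ≤ M := le_max_left _ _
  have hN1 : (1:ℝ) ≤ N := le_max_left _ _
  have hsmul : ∀ (i : I) (a : ℂ), T (lp.single 2 i a) = a • f i := by
    intro i a
    have : (lp.single 2 i a : lp (fun _ : I => ℂ) 2) = a • lp.single 2 i (1:ℂ) := by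
      rw [← lp.single_smul]; norm_num
    rw [this, map_smul, hfT i]
  have hTu : ∀ c : I →₀ ℂ,
      ∑ i ∈ c.support, c i • f i = T (∑ i ∈ c.support, lp.single 2 i (c i)) := by
    intro c
    rw [map_sum]
    exact Finset.sum_congr rfl fun i _ => (hsmul i (c i)).symm
  constructor
  · refine ⟨(N ^ 2)⁻¹, M ^ 2, by positivity, ?_, ?_, ?_⟩
    · calc (N ^ 2)⁻¹ ≤ 1 := by
            rw [inv_le_one_iff₀]; right; nlinarith
        _ ≤ M ^ 2 := by nlinarith
    · intro c
      set u := ∑ i ∈ c.support, lp.single 2 i (c i) with hu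
      have hnu : ‖u‖ ^ 2 = ∑ i ∈ c.support, ‖c i‖ ^ 2 := l2_norm_sq_sum_single c
      have key : ‖u‖ ≤ N * ‖T u‖ := by
        calc ‖u‖ = ‖T.symm (T u)‖ := by rw [T.symm_apply_apply]
          _ ≤ ‖(T.symm : H →L[ℂ] lp (fun _ : I => ℂ) 2)‖ * ‖T u‖ :=
              (T.symm : H →L[ℂ] lp (fun _ : I => ℂ) 2).le_opNorm _
          _ ≤ N * ‖T u‖ := mul_le_mul_of_nonneg_right (le_max_right _ _) (norm_nonneg _)
      rw [← hnu, hTu c, ← hu, inv_mul_le_iff₀ (by positivity)]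
      nlinarith [norm_nonneg u, norm_nonneg (T u)]
    · intro c
      set u := ∑ i ∈ c.support, lp.single 2 i (c i) with hu
      have hnu : ‖u‖ ^ 2 = ∑ i ∈ c.support, ‖c i‖ ^ 2 := l2_norm_sq_sum_single c
      have key : ‖T u‖ ≤ M * ‖u‖ := by
        calc ‖T u‖ ≤ ‖(T : lp (fun _ : I => ℂ) 2 →L[ℂ] H)‖ * ‖u‖ :=
              (T : lp (fun _ : I => ℂ) 2 →L[ℂ] H).le_opNorm _
          _ ≤ M * ‖u‖ := mul_le_mul_of_nonneg_right (le_max_right _ _) (norm_nonneg _)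
      rw [← hnu, hTu c, ← hu]
      nlinarith [norm_nonneg u, norm_nonneg (T u)]
  · rw [← Submodule.dense_iff_topologicalClosure_eq_top]
    intro y
    have hx := lp.hasSum_single (E := fun _ : I => ℂ) (p := 2) (by norm_num) (T.symm y)
    have ht : Filter.Tendsto
        (fun s : Finset I => T (∑ i ∈ s, lp.single 2 i ((T.symm y) i)))
        Filter.atTop (nhds y) := by
      have := ((T.continuous.tendsto (T.symm y)).comp hx)
      simpa [Function.comp_def, T.apply_symm_apply] using this
    refine mem_closure_of_tendsto ht (Filter.Eventually.of_forall fun s => ?_)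
    rw [map_sum]
    refine Submodule.sum_mem _ fun i _ => ?_
    rw [hsmul i _]
    exact Submodule.smul_mem _ _ (Submodule.subset_span ⟨i, rfl⟩)


lemma adjoint_equiv {E₁ E₂ : Type*} [NormedAddCommGroup E₁] [InnerProductSpace ℂ E₁]
    [CompleteSpace E₁] [NormedAddCommGroup E₂] [InnerProductSpace ℂ E₂] [CompleteSpace E₂]
    (T : E₁ ≃L[ℂ] E₂) :
    ∃ S : E₂ ≃L[ℂ] E₁,
      (∀ x, S x = ContinuousLinearMap.adjoint (T : E₁ →L[ℂ] E₂) x) ∧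
      ∀ y, S.symm y = ContinuousLinearMap.adjoint (T.symm : E₂ →L[ℂ] E₁) y := by
  have hc1 : (T : E₁ →L[ℂ] E₂) ∘L (T.symm : E₂ →L[ℂ] E₁) = ContinuousLinearMap.id ℂ E₂ := by
    ext x; simp
  have hc2 : (T.symm : E₂ →L[ℂ] E₁) ∘L (T : E₁ →L[ℂ] E₂) = ContinuousLinearMap.id ℂ E₁ := by
    ext x; simp
  have h1 : ContinuousLinearMap.adjoint (T.symm : E₂ →L[ℂ] E₁) ∘L
      ContinuousLinearMap.adjoint (T : E₁ →L[ℂ] E₂) = ContinuousLinearMap.id ℂ E₂ := by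
    rw [← ContinuousLinearMap.adjoint_comp, hc1, ContinuousLinearMap.adjoint_id]
  have h2 : ContinuousLinearMap.adjoint (T : E₁ →L[ℂ] E₂) ∘L
      ContinuousLinearMap.adjoint (T.symm : E₂ →L[ℂ] E₁) = ContinuousLinearMap.id ℂ E₁ := by
    rw [← ContinuousLinearMap.adjoint_comp, hc2, ContinuousLinearMap.adjoint_id]
  refine ⟨ContinuousLinearEquiv.equivOfInverse
      (ContinuousLinearMap.adjoint (T : E₁ →L[ℂ] E₂))
      (ContinuousLinearMap.adjoint (T.symm : E₂ →L[ℂ] E₁)) (fun x => ?_) (fun y => ?_),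
    fun x => rfl, fun y => rfl⟩
  · exact DFunLike.congr_fun h1 x
  · exact DFunLike.congr_fun h2 y

lemma hasSum_single_eq [CompleteSpace H] [DecidableEq I] {f : I → H}
    {g : lp (fun _ : I => ℂ) 2 → H}
    (hT : ∀ x, HasSum (fun i => x i • f i) (g x)) (i : I) :
    g (lp.single 2 i 1) = f i := by
  refine (hT _).unique ?_
  have he : (fun j => (lp.single 2 i (1:ℂ) : ∀ _, ℂ) j • f j)
      = fun j => if j = i then f i else 0 := by
    funext j
    rcases eq_or_ne j i with rfl | h
    · simp [lp.single_apply_self]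
    · simp [lp.single_apply_ne _ _ _ h, h]
  rw [he]
  exact hasSum_ite_eq i (f i)

lemma adjoint_coord [CompleteSpace H] [DecidableEq I]
    (T : lp (fun _ : I => ℂ) 2 ≃L[ℂ] H) (f : I → H)
    (hfT : ∀ i, T (lp.single 2 i 1) = f i) (x : H) (i : I) :
    (ContinuousLinearMap.adjoint (T : lp (fun _ : I => ℂ) 2 →L[ℂ] H) x : ∀ _, ℂ) i
      = ⟪f i, x⟫ := by
  have h1 : ⟪(lp.single 2 i (1:ℂ) : lp (fun _ : I => ℂ) 2),
      ContinuousLinearMap.adjoint (T : lp (fun _ : I => ℂ) 2 →L[ℂ] H) x⟫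
      = (ContinuousLinearMap.adjoint (T : lp (fun _ : I => ℂ) 2 →L[ℂ] H) x : ∀ _, ℂ) i := by
    rw [lp.inner_single_left]
    simp [RCLike.inner_apply]
  rw [← h1, ContinuousLinearMap.adjoint_inner_right]
  have : (T : lp (fun _ : I => ℂ) 2 →L[ℂ] H) (lp.single 2 i 1) = f i := hfT i
  rw [this]


end AuxHelpers

/-- for a Riesz basis `f`, the R-duals of type IV of `f` (with respect to
pairs of Riesz bases) are precisely the Riesz bases for `H`. -/
theorem rieszBasis_rdualIV_characterization
    {H : Type*} [NormedAddCommGroup H] [InnerProductSpace ℂ H] [CompleteSpace H]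
    {I : Type*} [Countable I]
    (f : I → H)
    (hf : IsRieszBasisFor f)
    (ω : I → H) :
    (∃ e hb : I → H, IsRieszBasisFor e ∧ IsRieszBasisFor hb ∧
        (∀ j, Summable fun i => ‖⟪f i, e j⟫‖ ^ 2) ∧
        ∀ j, HasSum (fun i => ⟪f i, e j⟫ • hb i) (ω j)) ↔
      IsRieszBasisFor ω := by
  classical
  constructor
  · rintro ⟨e, hb, hRe, hRhb, -, hsum⟩
    obtain ⟨F, hF⟩ := exists_equiv_of_rieszBasis f hf
    obtain ⟨E, hE⟩ := exists_equiv_of_rieszBasis e hRe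
    obtain ⟨V, hV⟩ := exists_equiv_of_rieszBasis hb hRhb
    obtain ⟨S, hS, -⟩ := adjoint_equiv F
    have hfF : ∀ i, F (lp.single 2 i 1) = f i := fun i => hasSum_single_eq hF i
    have heE : ∀ j, E (lp.single 2 j 1) = e j := fun j => hasSum_single_eq hE j
    have hωj : ∀ j, ω j = V (S (e j)) := by
      intro j
      refine (hsum j).unique ?_
      have h3 := hV (S (e j))
      have h4 : (fun i => (S (e j) : ∀ _ : I, ℂ) i • hb i) = fun i => ⟪f i, e j⟫ • hb i := by
        funext i
        rw [hS (e j), adjoint_coord F f hfF (e j) i]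
      rwa [h4] at h3
    refine isRieszBasisFor_of_equiv (E.trans (S.trans V)) ω fun j => ?_
    rw [hωj j, ← heE j]
    rfl
  · intro hω
    obtain ⟨F, hF⟩ := exists_equiv_of_rieszBasis f hf
    have hfF : ∀ i, F (lp.single 2 i 1) = f i := fun i => hasSum_single_eq hF i
    obtain ⟨S, hS, -⟩ := adjoint_equiv F.symm
    set e : I → H := fun j => S (lp.single 2 j 1) with he
    have hRe : IsRieszBasisFor e := isRieszBasisFor_of_equiv S e fun j => rfl
    have hinner : ∀ i j, ⟪f i, e j⟫ = if i = j then (1:ℂ) else 0 := by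
      intro i j
      show ⟪f i, S (lp.single 2 j 1)⟫ = _
      rw [hS, ContinuousLinearMap.adjoint_inner_right, ← hfF i]
      have h5 : ((F.symm : H →L[ℂ] lp (fun _ : I => ℂ) 2)) (F (lp.single 2 i 1))
          = lp.single 2 i 1 := F.symm_apply_apply _
      rw [h5, lp.inner_single_left]
      rcases eq_or_ne i j with rfl | h
      · simp [lp.single_apply_self, RCLike.inner_apply]
      · simp [lp.single_apply_ne 2 j _ h, h, RCLike.inner_apply]
    refine ⟨e, ω, hRe, hω, fun j => ?_, fun j => ?_⟩
    · refine summable_of_ne_finset_zero (s := {j}) fun i hi => ?_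
      rw [hinner i j, if_neg (by simpa using hi)]
      simp
    · have h4 : (fun i => ⟪f i, e j⟫ • ω i) = fun i => if i = j then ω j else 0 := by
        funext i
        rw [hinner i j]
        rcases eq_or_ne i j with rfl | h
        · simp
        · simp [h]
      rw [h4]
      exact hasSum_ite_eq j (ω j)


end
end

section
/- Let {f_i}_{i∈I} be a family in H with ∑_{i∈I} |⟨f_i, e_j⟩|² < ∞ for all j ∈ I, and let {ω_j}_{j∈I} be an R-dual of type I of {f_i} with respect to a pair of orthonormal bases ({e_j},{h_i}) of H. Then: (i) for all constants 0 < A ≤ B, {f_i} is a frame for H with bounds A, B if and only if {ω_j} is a Riesz sequence in H with bounds A, B; (ii) {ω_j} is a Riesz basis for H if and only if {f_i} is a Riesz basis for H. -/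
open scoped ComplexInnerProductSpace

noncomputable section

namespace RDualAux

variable {H : Type*} [NormedAddCommGroup H] [InnerProductSpace ℂ H]
variable {I : Type*}

/-- Coefficient extraction for expansions in a Hilbert basis. -/
lemma coeff_eq (hb : HilbertBasis I ℂ H) (d : I → ℂ) (v : H)
    (h : HasSum (fun i => d i • (hb i : H)) v) (i₀ : I) : ⟪(hb i₀ : H), v⟫ = d i₀ := by
  classical
  have h1 := h.mapL (innerSL ℂ (hb i₀ : H))
  have h2 : (fun i => (innerSL ℂ (hb i₀ : H)) (d i • (hb i : H)))
      = fun i => if i = i₀ then d i₀ else 0 := by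
    funext i
    rw [innerSL_apply_apply, inner_smul_right, orthonormal_iff_ite.mp hb.orthonormal i₀ i]
    by_cases hi : i = i₀
    · subst hi; simp
    · rw [if_neg hi, if_neg (fun h => hi h.symm), mul_zero]
  rw [h2] at h1
  simpa using h1.unique (hasSum_ite_eq i₀ (d i₀))

/-- Parseval for an expansion in a Hilbert basis. -/
lemma hasSum_norm_sq_of_hasSum (hb : HilbertBasis I ℂ H) (d : I → ℂ) (v : H)
    (h : HasSum (fun i => d i • (hb i : H)) v) :
    HasSum (fun i => ‖d i‖ ^ 2) (‖v‖ ^ 2) := by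
  have hcoef : ∀ i, ⟪(hb i : H), v⟫ = d i := coeff_eq hb d v h
  have h2 := hb.hasSum_inner_mul_inner v v
  have h3 : (fun i => ⟪v, (hb i : H)⟫ * ⟪(hb i : H), v⟫)
      = fun i => ((‖d i‖ ^ 2 : ℝ) : ℂ) := by
    funext i
    rw [← inner_conj_symm v (hb i : H), hcoef i, RCLike.conj_mul]
    norm_cast
  rw [h3] at h2
  have h4 := h2.mapL Complex.reCLM
  have h5 : (⟪v, v⟫ : ℂ).re = ‖v‖ ^ 2 := inner_self_eq_norm_sq (𝕜 := ℂ) v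
  simp only [Complex.reCLM_apply, Complex.ofReal_re] at h4
  rwa [h5] at h4

/-- Expansion of `x` in the Hilbert basis `e`. -/
lemma hasSum_expand (e : HilbertBasis I ℂ H) (x : H) :
    HasSum (fun j => ⟪(e j : H), x⟫ • (e j : H)) x := by
  simpa only [HilbertBasis.repr_apply_apply] using e.hasSum_repr x

/-- Parseval's identity. -/
lemma hasSum_inner_sq (e : HilbertBasis I ℂ H) (x : H) :
    HasSum (fun j => ‖⟪(e j : H), x⟫‖ ^ 2) (‖x‖ ^ 2) :=
  hasSum_norm_sq_of_hasSum e _ x (hasSum_expand e x)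

/-- Norm of a finite orthonormal combination. -/
lemma norm_sq_finsum (e : HilbertBasis I ℂ H) (s : Finset I) (c : I → ℂ) :
    ‖∑ j ∈ s, c j • (e j : H)‖ ^ 2 = ∑ j ∈ s, ‖c j‖ ^ 2 := by
  have h := e.orthonormal.inner_sum c c s
  have h2 := inner_self_eq_norm_sq (𝕜 := ℂ) (∑ j ∈ s, c j • (e j : H))
  rw [← h2, h, map_sum]
  refine Finset.sum_congr rfl fun j _ => ?_
  rw [RCLike.conj_mul, ← RCLike.ofReal_pow]
  exact RCLike.ofReal_re _

/-- Finite Cauchy–Schwarz, square-root form. -/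
lemma fin_cs (F : Finset I) (a b : I → ℝ) (ha : ∀ i, 0 ≤ a i) (hb : ∀ i, 0 ≤ b i) :
    ∑ i ∈ F, a i * b i ≤ Real.sqrt (∑ i ∈ F, a i ^ 2) * Real.sqrt (∑ i ∈ F, b i ^ 2) := by
  have h := Finset.sum_mul_sq_le_sq_mul_sq F a b
  have h1 : ∑ i ∈ F, a i * b i = Real.sqrt ((∑ i ∈ F, a i * b i) ^ 2) :=
    (Real.sqrt_sq (Finset.sum_nonneg fun i _ => mul_nonneg (ha i) (hb i))).symm
  rw [h1, ← Real.sqrt_mul (Finset.sum_nonneg fun i _ => sq_nonneg _)]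
  exact Real.sqrt_le_sqrt h

/-- ℓ² Minkowski inequality, in `HasSum` form. -/
lemma hasSum_add_sq_le {u v : I → ℂ} {a b c : ℝ}
    (hu : HasSum (fun i => ‖u i‖ ^ 2) a) (hv : HasSum (fun i => ‖v i‖ ^ 2) b)
    (hc : HasSum (fun i => ‖u i + v i‖ ^ 2) c) :
    c ≤ (Real.sqrt a + Real.sqrt b) ^ 2 := by
  have ha0 : (0:ℝ) ≤ a := hu.nonneg fun i => sq_nonneg _
  have hb0 : (0:ℝ) ≤ b := hv.nonneg fun i => sq_nonneg _
  rw [← hc.tsum_eq]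
  refine Summable.tsum_le_of_sum_le hc.summable fun F => ?_
  have key : ∑ i ∈ F, ‖u i + v i‖ ^ 2
      ≤ ∑ i ∈ F, ‖u i‖ ^ 2 + 2 * ∑ i ∈ F, ‖u i‖ * ‖v i‖ + ∑ i ∈ F, ‖v i‖ ^ 2 := by
    have hstep : ∀ i ∈ F, ‖u i + v i‖ ^ 2 ≤ ‖u i‖ ^ 2 + 2 * (‖u i‖ * ‖v i‖) + ‖v i‖ ^ 2 := by
      intro i _
      have h1 : ‖u i + v i‖ ≤ ‖u i‖ + ‖v i‖ := norm_add_le _ _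
      calc ‖u i + v i‖ ^ 2 ≤ (‖u i‖ + ‖v i‖) ^ 2 := pow_le_pow_left₀ (norm_nonneg _) h1 2
        _ = ‖u i‖ ^ 2 + 2 * (‖u i‖ * ‖v i‖) + ‖v i‖ ^ 2 := by ring
    calc ∑ i ∈ F, ‖u i + v i‖ ^ 2
        ≤ ∑ i ∈ F, (‖u i‖ ^ 2 + 2 * (‖u i‖ * ‖v i‖) + ‖v i‖ ^ 2) := Finset.sum_le_sum hstep
      _ = ∑ i ∈ F, ‖u i‖ ^ 2 + 2 * ∑ i ∈ F, ‖u i‖ * ‖v i‖ + ∑ i ∈ F, ‖v i‖ ^ 2 := by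
          rw [Finset.sum_add_distrib, Finset.sum_add_distrib, Finset.mul_sum]
  have hcs : ∑ i ∈ F, ‖u i‖ * ‖v i‖ ≤ Real.sqrt a * Real.sqrt b := by
    calc ∑ i ∈ F, ‖u i‖ * ‖v i‖
        ≤ Real.sqrt (∑ i ∈ F, ‖u i‖ ^ 2) * Real.sqrt (∑ i ∈ F, ‖v i‖ ^ 2) :=
          fin_cs F _ _ (fun i => norm_nonneg _) (fun i => norm_nonneg _)
      _ ≤ Real.sqrt a * Real.sqrt b := by
          gcongr
          · exact sum_le_hasSum F (fun i _ => sq_nonneg _) hu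
          · exact sum_le_hasSum F (fun i _ => sq_nonneg _) hv
  have h1 : ∑ i ∈ F, ‖u i‖ ^ 2 ≤ a := sum_le_hasSum F (fun i _ => sq_nonneg _) hu
  have h2 : ∑ i ∈ F, ‖v i‖ ^ 2 ≤ b := sum_le_hasSum F (fun i _ => sq_nonneg _) hv
  have expand : (Real.sqrt a + Real.sqrt b) ^ 2
      = a + 2 * (Real.sqrt a * Real.sqrt b) + b := by
    rw [add_sq, Real.sq_sqrt ha0, Real.sq_sqrt hb0]; ring
  rw [expand]
  linarith

/-- The key finite identity. -/
lemma key_fin (f : I → H) (e hb : HilbertBasis I ℂ H) (ω : I → H)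
    (hω : ∀ j, HasSum (fun i => ⟪f i, (e j : H)⟫ • (hb i : H)) (ω j))
    (F : Finset I) (g : I → ℂ) :
    HasSum (fun i => ‖⟪∑ j ∈ F, g j • (e j : H), f i⟫‖ ^ 2) (‖∑ j ∈ F, g j • ω j‖ ^ 2) := by
  set d : I → ℂ := fun i => ∑ j ∈ F, g j * ⟪f i, (e j : H)⟫ with hd
  have h1 : HasSum (fun i => d i • (hb i : H)) (∑ j ∈ F, g j • ω j) := by
    have h0 := hasSum_sum (f := fun j i => (g j * ⟪f i, (e j : H)⟫) • (hb i : H))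
      (a := fun j => g j • ω j) (s := F) (fun j _ => by
        simpa [smul_smul] using (hω j).const_smul (g j))
    have hfun : (fun i => d i • (hb i : H))
        = fun i => ∑ j ∈ F, (g j * ⟪f i, (e j : H)⟫) • (hb i : H) := by
      funext i; rw [hd]; exact Finset.sum_smul
    rw [hfun]; exact h0
  have h2 := hasSum_norm_sq_of_hasSum hb d _ h1
  have h3 : (fun i => ‖⟪∑ j ∈ F, g j • (e j : H), f i⟫‖ ^ 2) = fun i => ‖d i‖ ^ 2 := by
    funext i
    have heq : ⟪∑ j ∈ F, g j • (e j : H), f i⟫ = (starRingEnd ℂ) (d i) := by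
      rw [sum_inner, hd, map_sum]
      refine Finset.sum_congr rfl fun j _ => ?_
      rw [inner_smul_left, map_mul, inner_conj_symm]
    rw [heq, RCLike.norm_conj]
  rw [h3]; exact h2

section Bridging

variable [DecidableEq I]

/-- Package a finitely supported function into a `Finsupp`. -/
def finsuppOf (F : Finset I) (g : I → ℂ) : I →₀ ℂ :=
  Finsupp.onFinset F (fun j => if j ∈ F then g j else 0) (fun a ha => by
    by_cases h : a ∈ F
    · exact h
    · simp [h] at ha)

lemma finsuppOf_sum {M : Type*} [AddCommMonoid M] (F : Finset I) (g : I → ℂ)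
    (φ : I → ℂ → M) (hφ : ∀ j, φ j 0 = 0) :
    ∑ j ∈ (finsuppOf F g).support, φ j (finsuppOf F g j) = ∑ j ∈ F, φ j (g j) := by
  have h1 : ∑ j ∈ (finsuppOf F g).support, φ j (finsuppOf F g j)
      = ∑ j ∈ F, φ j (finsuppOf F g j) :=
    Finset.sum_subset Finsupp.support_onFinset_subset
      (fun j _ hjn => by rw [Finsupp.notMem_support_iff.mp hjn, hφ])
  rw [h1]
  refine Finset.sum_congr rfl fun j hj => ?_
  simp [finsuppOf, hj]

lemma riesz_lower_finset {ω : I → H} {A : ℝ} (hrl : RieszLower ω A) (F : Finset I) (g : I → ℂ) :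
    A * ∑ j ∈ F, ‖g j‖ ^ 2 ≤ ‖∑ j ∈ F, g j • ω j‖ ^ 2 := by
  have h := hrl (finsuppOf F g)
  rwa [finsuppOf_sum F g (fun j z => ‖z‖ ^ 2) (by simp),
    finsuppOf_sum F g (fun j z => z • ω j) (by simp)] at h

lemma riesz_upper_finset {ω : I → H} {B : ℝ} (hru : RieszUpper ω B) (F : Finset I) (g : I → ℂ) :
    ‖∑ j ∈ F, g j • ω j‖ ^ 2 ≤ B * ∑ j ∈ F, ‖g j‖ ^ 2 := by
  have h := hru (finsuppOf F g)
  rwa [finsuppOf_sum F g (fun j z => ‖z‖ ^ 2) (by simp),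
    finsuppOf_sum F g (fun j z => z • ω j) (by simp)] at h

end Bridging

/-- Part (i): the frame property of `f` is equivalent to the Riesz sequence property of its
R-dual of type I. -/
lemma frame_iff_riesz [CompleteSpace H] (f : I → H) (e hb : HilbertBasis I ℂ H) (ω : I → H)
    (hω : ∀ j, HasSum (fun i => ⟪f i, (e j : H)⟫ • (hb i : H)) (ω j))
    (A B : ℝ) (hA : 0 < A) (hAB : A ≤ B) :
    IsFrameWith f A B ↔ IsRieszSeqWith ω A B := by
  classical
  have hB0 : (0:ℝ) ≤ B := hA.le.trans hAB
  constructor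
  · rintro ⟨-, -, hlow, hup⟩
    refine ⟨hA, hAB, ?_, ?_⟩
    · intro c
      have hk := key_fin f e hb ω hω c.support c
      have hlb := hlow _ _ hk
      rwa [norm_sq_finsum e c.support c] at hlb
    · intro c
      obtain ⟨s, hs, hsB⟩ := hup (∑ j ∈ c.support, c j • (e j : H))
      have hk := key_fin f e hb ω hω c.support c
      rw [← hs.unique hk]
      rwa [norm_sq_finsum e c.support c] at hsB
  · rintro ⟨-, -, hrl, hru⟩
    have hupper : FrameUpper f B := by
      intro x
      have hbessel : HasSum (fun j => ‖⟪(e j : H), x⟫‖ ^ 2) (‖x‖ ^ 2) := hasSum_inner_sq e x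
      have hbound : ∀ G : Finset I, ∑ i ∈ G, ‖⟪x, f i⟫‖ ^ 2 ≤ B * ‖x‖ ^ 2 := by
        intro G
        have hcont : Continuous fun y : H => ∑ i ∈ G, ‖⟪y, f i⟫‖ ^ 2 :=
          continuous_finset_sum G fun i _ =>
            ((continuous_id.inner continuous_const).norm.pow 2)
        have hxF : Filter.Tendsto (fun F : Finset I => ∑ j ∈ F, ⟪(e j : H), x⟫ • (e j : H))
            Filter.atTop (nhds x) := hasSum_expand e x
        have hmain : ∀ F : Finset I,
            ∑ i ∈ G, ‖⟪∑ j ∈ F, ⟪(e j : H), x⟫ • (e j : H), f i⟫‖ ^ 2 ≤ B * ‖x‖ ^ 2 := by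
          intro F
          have hk := key_fin f e hb ω hω F (fun j => ⟪(e j : H), x⟫)
          have h1 : ∑ i ∈ G, ‖⟪∑ j ∈ F, ⟪(e j : H), x⟫ • (e j : H), f i⟫‖ ^ 2
              ≤ ‖∑ j ∈ F, ⟪(e j : H), x⟫ • ω j‖ ^ 2 :=
            sum_le_hasSum G (fun i _ => sq_nonneg _) hk
          have h2 := riesz_upper_finset hru F (fun j => ⟪(e j : H), x⟫)
          have h3 : ∑ j ∈ F, ‖⟪(e j : H), x⟫‖ ^ 2 ≤ ‖x‖ ^ 2 :=
            sum_le_hasSum F (fun j _ => sq_nonneg _) hbessel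
          calc ∑ i ∈ G, ‖⟪∑ j ∈ F, ⟪(e j : H), x⟫ • (e j : H), f i⟫‖ ^ 2
              ≤ ‖∑ j ∈ F, ⟪(e j : H), x⟫ • ω j‖ ^ 2 := h1
            _ ≤ B * ∑ j ∈ F, ‖⟪(e j : H), x⟫‖ ^ 2 := h2
            _ ≤ B * ‖x‖ ^ 2 := mul_le_mul_of_nonneg_left h3 hB0
        have htend : Filter.Tendsto
            (fun F : Finset I => ∑ i ∈ G, ‖⟪∑ j ∈ F, ⟪(e j : H), x⟫ • (e j : H), f i⟫‖ ^ 2)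
            Filter.atTop (nhds (∑ i ∈ G, ‖⟪x, f i⟫‖ ^ 2)) := (hcont.tendsto x).comp hxF
        exact le_of_tendsto htend (Filter.Eventually.of_forall hmain)
      have hsummable : Summable fun i => ‖⟪x, f i⟫‖ ^ 2 :=
        summable_of_sum_le (fun i => sq_nonneg _) hbound
      exact ⟨_, hsummable.hasSum, Summable.tsum_le_of_sum_le hsummable hbound⟩
    refine ⟨hA, hAB, ?_, hupper⟩
    intro x s hs
    have hbessel : HasSum (fun j => ‖⟪(e j : H), x⟫‖ ^ 2) (‖x‖ ^ 2) := hasSum_inner_sq e x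
    have hs0 : 0 ≤ s := hs.nonneg fun i => sq_nonneg _
    have hxF : Filter.Tendsto (fun F : Finset I => ∑ j ∈ F, ⟪(e j : H), x⟫ • (e j : H))
        Filter.atTop (nhds x) := hasSum_expand e x
    have hchain : ∀ F : Finset I, A * ∑ j ∈ F, ‖⟪(e j : H), x⟫‖ ^ 2
        ≤ (Real.sqrt s + Real.sqrt B * ‖(∑ j ∈ F, ⟪(e j : H), x⟫ • (e j : H)) - x‖) ^ 2 := by
      intro F
      set y : H := ∑ j ∈ F, ⟪(e j : H), x⟫ • (e j : H) with hy
      have hk := key_fin f e hb ω hω F (fun j => ⟪(e j : H), x⟫)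
      have h1 := riesz_lower_finset hrl F (fun j => ⟪(e j : H), x⟫)
      obtain ⟨b, hbsum, hble⟩ := hupper (y - x)
      have hmink : ‖∑ j ∈ F, ⟪(e j : H), x⟫ • ω j‖ ^ 2 ≤ (Real.sqrt s + Real.sqrt b) ^ 2 := by
        refine hasSum_add_sq_le hs hbsum ?_
        have hfun : (fun i => ‖⟪x, f i⟫ + ⟪y - x, f i⟫‖ ^ 2)
            = fun i => ‖⟪y, f i⟫‖ ^ 2 := by
          funext i; rw [← inner_add_left, add_sub_cancel]
        rw [hfun]
        exact hk
      have hsqb : Real.sqrt b ≤ Real.sqrt B * ‖y - x‖ := by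
        calc Real.sqrt b ≤ Real.sqrt (B * ‖y - x‖ ^ 2) := Real.sqrt_le_sqrt hble
          _ = Real.sqrt B * ‖y - x‖ := by
              rw [Real.sqrt_mul hB0, Real.sqrt_sq (norm_nonneg _)]
      calc A * ∑ j ∈ F, ‖⟪(e j : H), x⟫‖ ^ 2
          ≤ ‖∑ j ∈ F, ⟪(e j : H), x⟫ • ω j‖ ^ 2 := h1
        _ ≤ (Real.sqrt s + Real.sqrt b) ^ 2 := hmink
        _ ≤ (Real.sqrt s + Real.sqrt B * ‖y - x‖) ^ 2 := by
            refine pow_le_pow_left₀ (by positivity) ?_ 2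
            exact add_le_add_right hsqb _
    have hL : Filter.Tendsto (fun F : Finset I => A * ∑ j ∈ F, ‖⟪(e j : H), x⟫‖ ^ 2)
        Filter.atTop (nhds (A * ‖x‖ ^ 2)) := (hbessel : Filter.Tendsto _ _ _).const_mul A
    have hR : Filter.Tendsto
        (fun F : Finset I =>
          (Real.sqrt s + Real.sqrt B * ‖(∑ j ∈ F, ⟪(e j : H), x⟫ • (e j : H)) - x‖) ^ 2)
        Filter.atTop (nhds s) := by
      have h0 : Filter.Tendsto
          (fun F : Finset I => ‖(∑ j ∈ F, ⟪(e j : H), x⟫ • (e j : H)) - x‖)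
          Filter.atTop (nhds 0) := by
        have := (hxF.sub (tendsto_const_nhds (x := x))).norm
        simpa using this
      have h1 := ((tendsto_const_nhds (x := Real.sqrt s)).add
        ((tendsto_const_nhds (x := Real.sqrt B)).mul h0)).pow 2
      simpa [Real.sq_sqrt hs0] using h1
    exact le_of_tendsto_of_tendsto' hL hR hchain

/-- A Riesz sequence upper bound gives an upper frame bound (Bessel). -/
lemma frameUpper_of_rieszUpper (ω : I → H) (B : ℝ) (hB0 : 0 ≤ B) (hru : RieszUpper ω B) :
    FrameUpper ω B := by
  classical
  intro x
  have hbound : ∀ F : Finset I, ∑ j ∈ F, ‖⟪x, ω j⟫‖ ^ 2 ≤ B * ‖x‖ ^ 2 := by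
    intro F
    set t := ∑ j ∈ F, ‖⟪x, ω j⟫‖ ^ 2 with ht
    have ht0 : 0 ≤ t := Finset.sum_nonneg fun _ _ => sq_nonneg _
    set u := ∑ j ∈ F, ⟪ω j, x⟫ • ω j with hu
    have hinner : ⟪u, x⟫ = ((t : ℝ) : ℂ) := by
      rw [hu, sum_inner, ht, Complex.ofReal_sum]
      refine Finset.sum_congr rfl fun j _ => ?_
      rw [inner_smul_left, RCLike.conj_mul, norm_inner_symm (ω j) x]
      norm_cast
    have husq : ‖u‖ ≤ Real.sqrt (B * t) := by
      have h2 := riesz_upper_finset hru F (fun j => ⟪ω j, x⟫)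
      have h3 : ∑ j ∈ F, ‖⟪ω j, x⟫‖ ^ 2 = t := by
        rw [ht]
        exact Finset.sum_congr rfl fun j _ => by rw [norm_inner_symm (ω j) x]
      rw [h3] at h2
      calc ‖u‖ = Real.sqrt (‖u‖ ^ 2) := (Real.sqrt_sq (norm_nonneg _)).symm
        _ ≤ Real.sqrt (B * t) := Real.sqrt_le_sqrt h2
    have htle : t ≤ Real.sqrt (B * t) * ‖x‖ := by
      calc t = ‖((t : ℝ) : ℂ)‖ := by rw [Complex.norm_real]; exact (abs_of_nonneg ht0).symm
        _ = ‖⟪u, x⟫‖ := by rw [hinner]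
        _ ≤ ‖u‖ * ‖x‖ := norm_inner_le_norm u x
        _ ≤ Real.sqrt (B * t) * ‖x‖ := mul_le_mul_of_nonneg_right husq (norm_nonneg _)
    rcases eq_or_lt_of_le ht0 with h0 | hpos
    · rw [← h0]; positivity
    · have hst : Real.sqrt t ≤ Real.sqrt B * ‖x‖ := by
        have hne : 0 < Real.sqrt t := Real.sqrt_pos.mpr hpos
        have hmul : Real.sqrt t * Real.sqrt t ≤ (Real.sqrt B * ‖x‖) * Real.sqrt t := by
          rw [Real.mul_self_sqrt ht0]
          calc t ≤ Real.sqrt (B * t) * ‖x‖ := htle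
            _ = (Real.sqrt B * ‖x‖) * Real.sqrt t := by rw [Real.sqrt_mul hB0]; ring
        exact le_of_mul_le_mul_right hmul hne
      calc t = Real.sqrt t ^ 2 := (Real.sq_sqrt ht0).symm
        _ ≤ (Real.sqrt B * ‖x‖) ^ 2 := pow_le_pow_left₀ (Real.sqrt_nonneg _) hst 2
        _ = B * ‖x‖ ^ 2 := by rw [mul_pow, Real.sq_sqrt hB0]
  have hsummable := summable_of_sum_le (fun j => sq_nonneg _) hbound
  exact ⟨_, hsummable.hasSum, Summable.tsum_le_of_sum_le hsummable hbound⟩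

/-- The R-dual relation is symmetric: `f` is the R-dual of type I of `ω` w.r.t. `(hb, e)`. -/
lemma dual_hasSum (f : I → H) (e hb : HilbertBasis I ℂ H) (ω : I → H)
    (hω : ∀ j, HasSum (fun i => ⟪f i, (e j : H)⟫ • (hb i : H)) (ω j)) :
    ∀ i, HasSum (fun j => ⟪ω j, (hb i : H)⟫ • (e j : H)) (f i) := by
  intro i
  have hcoef : ∀ j, ⟪ω j, (hb i : H)⟫ = ⟪(e j : H), f i⟫ := by
    intro j
    have h1 : ⟪(hb i : H), ω j⟫ = ⟪f i, (e j : H)⟫ := coeff_eq hb _ _ (hω j) i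
    calc ⟪ω j, (hb i : H)⟫ = starRingEnd ℂ ⟪(hb i : H), ω j⟫ := (inner_conj_symm _ _).symm
      _ = starRingEnd ℂ ⟪f i, (e j : H)⟫ := by rw [h1]
      _ = ⟪(e j : H), f i⟫ := inner_conj_symm _ _
  have hfn : (fun j => ⟪ω j, (hb i : H)⟫ • (e j : H))
      = fun j => ⟪(e j : H), f i⟫ • (e j : H) := funext fun j => by rw [hcoef j]
  rw [hfn]
  exact hasSum_expand e (f i)

/-- Part (ii), one direction: if the R-dual `ω` is a Riesz basis then `f` is a Riesz basis. -/
lemma rb_transfer [CompleteSpace H] (f : I → H) (e hb : HilbertBasis I ℂ H) (ω : I → H)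
    (hω : ∀ j, HasSum (fun i => ⟪f i, (e j : H)⟫ • (hb i : H)) (ω j)) :
    IsRieszBasisFor ω → IsRieszBasisFor f := by
  classical
  rintro ⟨⟨A, B, hA, hAB, hrl, hru⟩, hdense⟩
  have hB0 : (0:ℝ) ≤ B := hA.le.trans hAB
  have hf_frame : IsFrameWith f A B :=
    (frame_iff_riesz f e hb ω hω A B hA hAB).mpr ⟨hA, hAB, hrl, hru⟩
  obtain ⟨-, -, hflow, hfup⟩ := hf_frame
  -- construct the synthesis-type operator V
  have hVsum : ∀ x : H, ∃ v : H, HasSum (fun i => ⟪f i, x⟫ • (hb i : H)) v := by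
    intro x
    obtain ⟨s, hs, -⟩ := hfup x
    have hs' : Summable fun i => ‖⟪f i, x⟫‖ ^ 2 :=
      hs.summable.congr fun i => by rw [norm_inner_symm]
    have hmem : Memℓp (fun i => ⟪f i, x⟫) 2 := by
      apply memℓp_gen
      have h2 : ((2 : ENNReal).toReal) = (2 : ℝ) := by norm_num
      rw [h2]
      refine hs'.congr fun i => ?_
      rw [show ((2:ℝ) : ℝ) = ((2:ℕ) : ℝ) by norm_num, Real.rpow_natCast]
    exact ⟨hb.repr.symm ⟨fun i => ⟪f i, x⟫, hmem⟩, hb.hasSum_repr_symm ⟨fun i => ⟪f i, x⟫, hmem⟩⟩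
  choose V0 hV0 using hVsum
  have hV0normx : ∀ x, HasSum (fun i => ‖⟪x, f i⟫‖ ^ 2) (‖V0 x‖ ^ 2) := by
    intro x
    have h1 := hasSum_norm_sq_of_hasSum hb _ _ (hV0 x)
    have hfn : (fun i => ‖⟪f i, x⟫‖ ^ 2) = fun i => ‖⟪x, f i⟫‖ ^ 2 :=
      funext fun i => by rw [norm_inner_symm]
    rwa [hfn] at h1
  have hlowV : ∀ x, A * ‖x‖ ^ 2 ≤ ‖V0 x‖ ^ 2 := fun x => hflow x _ (hV0normx x)
  have hupV : ∀ x, ‖V0 x‖ ^ 2 ≤ B * ‖x‖ ^ 2 := by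
    intro x
    obtain ⟨s, hs, hsB⟩ := hfup x
    rwa [hs.unique (hV0normx x)] at hsB
  have hadd : ∀ x y, V0 (x + y) = V0 x + V0 y := by
    intro x y
    have h1 := (hV0 x).add (hV0 y)
    have hfn : (fun i => ⟪f i, x⟫ • (hb i : H) + ⟪f i, y⟫ • (hb i : H))
        = fun i => ⟪f i, x + y⟫ • (hb i : H) :=
      funext fun i => by rw [inner_add_right, add_smul]
    rw [hfn] at h1
    exact (hV0 (x + y)).unique h1
  have hsmul : ∀ (a : ℂ) (x : H), V0 (a • x) = a • V0 x := by
    intro a x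
    have h1 := (hV0 x).const_smul a
    have hfn : (fun i => a • (⟪f i, x⟫ • (hb i : H))) = fun i => ⟪f i, a • x⟫ • (hb i : H) :=
      funext fun i => by rw [inner_smul_right, smul_smul]
    rw [hfn] at h1
    exact (hV0 (a • x)).unique h1
  let Vl : H →ₗ[ℂ] H := { toFun := V0, map_add' := hadd, map_smul' := hsmul }
  have hVbound : ∀ x, ‖Vl x‖ ≤ Real.sqrt B * ‖x‖ := by
    intro x
    calc ‖Vl x‖ = Real.sqrt (‖V0 x‖ ^ 2) := (Real.sqrt_sq (norm_nonneg _)).symm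
      _ ≤ Real.sqrt (B * ‖x‖ ^ 2) := Real.sqrt_le_sqrt (hupV x)
      _ = Real.sqrt B * ‖x‖ := by rw [Real.sqrt_mul hB0, Real.sqrt_sq (norm_nonneg _)]
  let V : H →L[ℂ] H := LinearMap.mkContinuous Vl (Real.sqrt B) hVbound
  have hVapp : ∀ x, V x = V0 x := fun x => rfl
  have hVlower : ∀ x, Real.sqrt A * ‖x‖ ≤ ‖V x‖ := by
    intro x
    calc Real.sqrt A * ‖x‖ = Real.sqrt (A * ‖x‖ ^ 2) := by
          rw [Real.sqrt_mul hA.le, Real.sqrt_sq (norm_nonneg _)]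
      _ ≤ Real.sqrt (‖V0 x‖ ^ 2) := Real.sqrt_le_sqrt (hlowV x)
      _ = ‖V x‖ := by rw [Real.sqrt_sq (norm_nonneg _), hVapp]
  have hsA : 0 < Real.sqrt A := Real.sqrt_pos.mpr hA
  have hanti : AntilipschitzWith (⟨(Real.sqrt A)⁻¹, by positivity⟩ : NNReal) V := by
    apply V.antilipschitz_of_bound
    intro x
    show ‖x‖ ≤ (Real.sqrt A)⁻¹ * ‖V x‖
    rw [le_inv_mul_iff₀ hsA]
    exact hVlower x
  have hclosed : IsClosed (Set.range V) := hanti.isClosed_range V.uniformContinuous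
  have hωV : ∀ j, ω j = V (e j) := by
    intro j
    rw [hVapp]
    exact (hω j).unique (hV0 (e j))
  have hsurj : ∀ x : H, ∃ y : H, V y = x := by
    have hspan : Submodule.span ℂ (Set.range ω) ≤ LinearMap.range (V : H →ₗ[ℂ] H) := by
      rw [Submodule.span_le]
      rintro _ ⟨j, rfl⟩
      exact ⟨e j, (hωV j).symm⟩
    have hclosed' : IsClosed ((LinearMap.range (V : H →ₗ[ℂ] H) : Submodule ℂ H) : Set H) := by
      have hset : ((LinearMap.range (V : H →ₗ[ℂ] H) : Submodule ℂ H) : Set H) = Set.range V := by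
        ext z
        simp [LinearMap.mem_range]
      rw [hset]
      exact hclosed
    have h2 := Submodule.topologicalClosure_minimal _ hspan hclosed'
    rw [hdense] at h2
    intro x
    have hx : x ∈ LinearMap.range (V : H →ₗ[ℂ] H) := h2 Submodule.mem_top
    exact LinearMap.mem_range.mp hx
  have hωupper : FrameUpper ω B := frameUpper_of_rieszUpper ω B hB0 hru
  have hωlower : FrameLower ω A := by
    intro x s hs
    have hs0 : 0 ≤ s := hs.nonneg fun j => sq_nonneg _
    by_cases hx0 : x = 0
    · rw [hx0, norm_zero]; simpa using hs0
    obtain ⟨y, hy⟩ := hsurj x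
    have hyexp : HasSum (fun j => ⟪(e j : H), y⟫ • (e j : H)) y := hasSum_expand e y
    have h1 : HasSum (fun j => ⟪(e j : H), y⟫ • ω j) x := by
      have h0 := hyexp.mapL V
      have hfn : (fun j => V (⟪(e j : H), y⟫ • (e j : H)))
          = fun j => ⟪(e j : H), y⟫ • ω j :=
        funext fun j => by rw [map_smul, ← hωV j]
      rwa [hfn, hy] at h0
    have h2 : HasSum (fun j => ⟪(e j : H), y⟫ * ⟪x, ω j⟫) ⟪x, x⟫ := by
      have h0 := h1.mapL (innerSL ℂ x)
      have hfn : (fun j => (innerSL ℂ x) (⟪(e j : H), y⟫ • ω j))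
          = fun j => ⟪(e j : H), y⟫ * ⟪x, ω j⟫ :=
        funext fun j => by rw [innerSL_apply_apply, inner_smul_right]
      rwa [hfn] at h0
    have hbessely : HasSum (fun j => ‖⟪(e j : H), y⟫‖ ^ 2) (‖y‖ ^ 2) := hasSum_inner_sq e y
    have hpart : ∀ F : Finset I, ‖∑ j ∈ F, ⟪(e j : H), y⟫ * ⟪x, ω j⟫‖ ≤ ‖y‖ * Real.sqrt s := by
      intro F
      have hws : ∑ j ∈ F, ‖⟪x, ω j⟫‖ ^ 2 ≤ s := sum_le_hasSum F (fun j _ => sq_nonneg _) hs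
      have hys : ∑ j ∈ F, ‖⟪(e j : H), y⟫‖ ^ 2 ≤ ‖y‖ ^ 2 :=
        sum_le_hasSum F (fun j _ => sq_nonneg _) hbessely
      calc ‖∑ j ∈ F, ⟪(e j : H), y⟫ * ⟪x, ω j⟫‖
          ≤ ∑ j ∈ F, ‖⟪(e j : H), y⟫‖ * ‖⟪x, ω j⟫‖ := by
            refine (norm_sum_le _ _).trans (le_of_eq ?_)
            exact Finset.sum_congr rfl fun j _ => norm_mul _ _
        _ ≤ Real.sqrt (∑ j ∈ F, ‖⟪(e j : H), y⟫‖ ^ 2) * Real.sqrt (∑ j ∈ F, ‖⟪x, ω j⟫‖ ^ 2) :=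
            fin_cs F _ _ (fun _ => norm_nonneg _) (fun _ => norm_nonneg _)
        _ ≤ ‖y‖ * Real.sqrt s := by
            have hy1 : Real.sqrt (∑ j ∈ F, ‖⟪(e j : H), y⟫‖ ^ 2) ≤ ‖y‖ := by
              rw [show ‖y‖ = Real.sqrt (‖y‖ ^ 2) from (Real.sqrt_sq (norm_nonneg _)).symm]
              exact Real.sqrt_le_sqrt hys
            have hy2 : Real.sqrt (∑ j ∈ F, ‖⟪x, ω j⟫‖ ^ 2) ≤ Real.sqrt s :=
              Real.sqrt_le_sqrt hws
            exact mul_le_mul hy1 hy2 (Real.sqrt_nonneg _) (norm_nonneg _)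
    have hxx : ‖(⟪x, x⟫ : ℂ)‖ = ‖x‖ ^ 2 := by
      rw [inner_self_eq_norm_sq_to_K, norm_pow]
      simp [abs_of_nonneg (norm_nonneg x)]
    have hnorm_tend : Filter.Tendsto
        (fun F : Finset I => ‖∑ j ∈ F, ⟪(e j : H), y⟫ * ⟪x, ω j⟫‖)
        Filter.atTop (nhds ‖(⟪x, x⟫ : ℂ)‖) := (h2 : Filter.Tendsto _ _ _).norm
    have hkey : ‖x‖ ^ 2 ≤ ‖y‖ * Real.sqrt s := by
      rw [← hxx]
      exact le_of_tendsto hnorm_tend (Filter.Eventually.of_forall hpart)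
    have hyx : Real.sqrt A * ‖y‖ ≤ ‖x‖ := by
      rw [← hy]
      exact hVlower y
    have hx : 0 < ‖x‖ := norm_pos_iff.mpr hx0
    have hsx : Real.sqrt A * ‖x‖ ^ 2 ≤ ‖x‖ * Real.sqrt s := by
      calc Real.sqrt A * ‖x‖ ^ 2 ≤ Real.sqrt A * (‖y‖ * Real.sqrt s) :=
            mul_le_mul_of_nonneg_left hkey (Real.sqrt_nonneg _)
        _ = (Real.sqrt A * ‖y‖) * Real.sqrt s := by ring
        _ ≤ ‖x‖ * Real.sqrt s := mul_le_mul_of_nonneg_right hyx (Real.sqrt_nonneg _)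
    have h3 : Real.sqrt A * ‖x‖ ≤ Real.sqrt s := by
      have h4 : (Real.sqrt A * ‖x‖) * ‖x‖ ≤ Real.sqrt s * ‖x‖ := by
        calc (Real.sqrt A * ‖x‖) * ‖x‖ = Real.sqrt A * ‖x‖ ^ 2 := by ring
          _ ≤ ‖x‖ * Real.sqrt s := hsx
          _ = Real.sqrt s * ‖x‖ := by ring
      exact le_of_mul_le_mul_right h4 hx
    calc A * ‖x‖ ^ 2 = (Real.sqrt A * ‖x‖) ^ 2 := by rw [mul_pow, Real.sq_sqrt hA.le]
      _ ≤ Real.sqrt s ^ 2 := pow_le_pow_left₀ (by positivity) h3 2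
      _ = s := Real.sq_sqrt hs0
  have hωframe : IsFrameWith ω A B := ⟨hA, hAB, hωlower, hωupper⟩
  have hfRS : IsRieszSeqWith f A B :=
    (frame_iff_riesz ω hb e f (dual_hasSum f e hb ω hω) A B hA hAB).mp hωframe
  have hfdense : (Submodule.span ℂ (Set.range f)).topologicalClosure = ⊤ := by
    rw [Submodule.topologicalClosure_eq_top_iff, Submodule.eq_bot_iff]
    intro x hx
    have hxo : ∀ i, ⟪x, f i⟫ = 0 := by
      intro i
      have h1 : ⟪f i, x⟫ = 0 :=
        (Submodule.mem_orthogonal _ x).mp hx (f i) (Submodule.subset_span ⟨i, rfl⟩)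
      rw [← inner_conj_symm x (f i), h1, map_zero]
    have h0 : HasSum (fun i => ‖⟪x, f i⟫‖ ^ 2) 0 := by
      have hfn : (fun i => ‖⟪x, f i⟫‖ ^ 2) = fun _ => (0 : ℝ) :=
        funext fun i => by rw [hxo i]; simp
      rw [hfn]
      exact hasSum_zero
    have h5 := hflow x 0 h0
    have h6 : ‖x‖ ^ 2 = 0 := le_antisymm (by nlinarith) (sq_nonneg _)
    exact norm_eq_zero.mp (sq_eq_zero_iff.mp h6)
  exact ⟨⟨A, B, hfRS⟩, hfdense⟩

end RDualAux


/-- properties of R-duals of type I: `f` is a frame with bounds `A`, `B` iff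
its R-dual of type I `ω` is a Riesz sequence with bounds `A`, `B`; and `ω` is a Riesz basis
for `H` iff `f` is a Riesz basis for `H`. -/
theorem rdualI_frame_iff_riesz
    {H : Type*} [NormedAddCommGroup H] [InnerProductSpace ℂ H] [CompleteSpace H]
    {I : Type*} [Countable I]
    (f : I → H)
    (e hb : HilbertBasis I ℂ H)
    (hsq : ∀ j, Summable fun i => ‖⟪f i, (e j : H)⟫‖ ^ 2)
    (ω : I → H)
    -- ω is the R-dual of type I of f with respect to (e, hb)
    (hω : ∀ j, HasSum (fun i => ⟪f i, (e j : H)⟫ • (hb i : H)) (ω j)) :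
    (∀ A B : ℝ, 0 < A → A ≤ B → (IsFrameWith f A B ↔ IsRieszSeqWith ω A B)) ∧
      (IsRieszBasisFor ω ↔ IsRieszBasisFor f) := by
  refine ⟨fun A B hA hAB => RDualAux.frame_iff_riesz f e hb ω hω A B hA hAB, ?_⟩
  exact ⟨RDualAux.rb_transfer f e hb ω hω,
    RDualAux.rb_transfer ω hb e f (RDualAux.dual_hasSum f e hb ω hω)⟩

end
end
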